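/- Consider the chain graph on n agents with edges E = {(i,i+1) : i = 1,…,n-1} (made undirected). The point x with x_{i+1} = x_i + ξ for all i (i.e., x_i = x_1 + (i-1)ξ) belongs to P(0,E), the equilibrium polyhedron for the zero disturbance. Consequently, for this equilibrium the maximum pairwise state difference equals (n-1)ξ, so ε-consensus with ε < (n-1)ξ/2 cannot be guaranteed. -/

import Mathlib

/-- on the chain graph, the staircase point x_i = x_1 + (i-1)ξ belongs to
P(0,E) (zero disturbance), and its spread equals (n-1)ξ. -/
theorem chain_staircase_equilibrium
    (n : ℕ) (hn : 2 ≤ n) (ξ : ℝ) (hξ : 0 < ξ) (c : ℝ) :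
    let N : Fin n → Finset (Fin n) :=
      fun i => Finset.univ.filter (fun j : Fin n => (j : ℕ) = (i : ℕ) + 1 ∨ (j : ℕ) + 1 = (i : ℕ))
    let x : Fin n → ℝ := fun i => c + (i : ℕ) * ξ
    (∀ i : Fin n, |(∑ j ∈ N i, x j) / ((N i).card : ℝ) - x i| ≤ ξ) ∧
    x ⟨n - 1, by omega⟩ - x ⟨0, by omega⟩ = ((n : ℝ) - 1) * ξ := by
  intro N x
  constructor
  · intro i
    by_cases hi0 : (i : ℕ) = 0
    · have hN : N i = {⟨1, by omega⟩} := by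
        ext j
        simp only [N, Finset.mem_filter, Finset.mem_univ, true_and, Finset.mem_singleton,
          Fin.ext_iff]
        omega
      rw [hN]
      have h : |(c + (1:ℝ) * ξ) / 1 - (c + (0:ℝ) * ξ)| ≤ ξ := by
        rw [show (c + (1:ℝ)*ξ)/1 - (c+(0:ℝ)*ξ) = ξ by ring, abs_of_pos hξ]
      simpa [x, hi0] using h
    · by_cases hin : (i : ℕ) = n - 1
      · have hN : N i = {⟨n - 2, by omega⟩} := by
          ext j
          simp only [N, Finset.mem_filter, Finset.mem_univ, true_and, Finset.mem_singleton,
            Fin.ext_iff]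
          omega
        rw [hN]
        simp only [x, Finset.sum_singleton, Finset.card_singleton, Nat.cast_one, hin]
        have h2 : ((n - 2 : ℕ) : ℝ) = ((n - 1 : ℕ) : ℝ) - 1 := by
          have : (n - 1 : ℕ) = (n - 2) + 1 := by omega
          rw [this]; push_cast; ring
        rw [show ((c + ((n-2:ℕ):ℝ) * ξ) / 1 - (c + ((n-1:ℕ):ℝ) * ξ)) = -ξ by
          rw [h2]; ring]
        rw [abs_neg, abs_of_pos hξ]
      · have hi1 : 1 ≤ (i : ℕ) := by omega
        have hilt : (i : ℕ) + 1 < n := by have := i.isLt; omega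
        have hne : (⟨(i:ℕ) - 1, by omega⟩ : Fin n) ≠ ⟨(i:ℕ) + 1, hilt⟩ := by
          simp only [ne_eq, Fin.ext_iff]; omega
        have hN : N i = {⟨(i:ℕ) - 1, by omega⟩, ⟨(i:ℕ) + 1, hilt⟩} := by
          ext j
          simp only [N, Finset.mem_filter, Finset.mem_univ, true_and, Finset.mem_insert,
            Finset.mem_singleton, Fin.ext_iff]
          omega
        rw [hN, Finset.sum_pair hne, Finset.card_pair hne]
        have hm : (((i:ℕ) - 1 : ℕ) : ℝ) = ((i:ℕ) : ℝ) - 1 := by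
          have : (i : ℕ) = ((i:ℕ) - 1) + 1 := by omega
          nth_rewrite 2 [this]; push_cast; ring
        simp only [x]
        rw [show ((c + (((i:ℕ)-1:ℕ):ℝ) * ξ + (c + (((i:ℕ)+1:ℕ):ℝ) * ξ)) / ((2:ℕ):ℝ)
            - (c + ((i:ℕ):ℝ) * ξ)) = 0 by rw [hm]; push_cast; ring]
        simpa using le_of_lt hξ
  · simp only [x]
    have : ((n - 1 : ℕ) : ℝ) = (n : ℝ) - 1 := by
      have : n = (n - 1) + 1 := by omega
      nth_rewrite 2 [this]; push_cast; ring
    rw [this]; push_cast; ring
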